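/- Let S = K[x_1,...,x_4] and I = ((x_1 x_2)^{w_1}, x_2 x_3, (x_3 x_4)^{w_3}) with w_1 ≥ w_3 ≥ 1 and w_1 ≥ 2. Then reg(S/I) = 2w_1 - 1 and depth(S/I) = 2. -/

import Mathlib

open MvPolynomial

noncomputable section

namespace EWGraph

variable (K : Type) [Field K]

/-- The polynomial ring `K[x_1,…,x_n]`. -/
abbrev Poly (n : ℕ) := MvPolynomial (Fin n) K

variable {K}

/-- `g` is the degree-`d` part of a twisted copy `S(-tw)` of the polynomial ring:
it is homogeneous of degree `d - tw` (and `0` if `d - tw < 0`). -/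
def PieceHomog {n : ℕ} (tw d : ℤ) (g : Poly K n) : Prop :=
  if 0 ≤ d - tw then g.IsHomogeneous (d - tw).toNat else g = 0

/-- The augmentation map `S^m → S` sending the `k`-th basis vector to `g k`. -/
def aug {n m : ℕ} (g : Fin m → Poly K n) : (Fin m → Poly K n) →ₗ[Poly K n] Poly K n where
  toFun v := ∑ k, v k * g k
  map_add' u v := by simp [add_mul, Finset.sum_add_distrib]
  map_smul' c v := by simp [Finset.mul_sum, mul_assoc]

/-- A graded free resolution
`⋯ → F_1 → F_0 → S → S/I → 0` of `S/I`, where `F_i = ⊕_k S(-t i k)` has rank `r i`,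
all differentials are given by homogeneous matrices, the image of `F_0 → S` is `I`,
and the complex is exact in positive degrees. -/
structure GradedRes {n : ℕ} (I : Ideal (Poly K n)) where
  r : ℕ → ℕ
  t : (i : ℕ) → Fin (r i) → ℤ
  g : Fin (r 0) → Poly K n
  ghom : ∀ k, PieceHomog 0 (t 0 k) (g k)
  gspan : Ideal.span (Set.range g) = I
  d : (i : ℕ) → Matrix (Fin (r i)) (Fin (r (i + 1))) (Poly K n)
  dhom : ∀ i k k', PieceHomog (t i k) (t (i + 1) k') (d i k k')
  exact_zero : LinearMap.ker (aug g) = LinearMap.range (d 0).mulVecLin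
  exact_succ : ∀ i, LinearMap.ker (d i).mulVecLin = LinearMap.range (d (i + 1)).mulVecLin

/-- The projective dimension of `S/I`: the smallest possible length of a graded free
resolution of `S/I` (the minimal graded free resolution achieves it). -/
def pdQuot {n : ℕ} (I : Ideal (Poly K n)) : ℕ :=
  sInf {m : ℕ | ∃ F : GradedRes I, ∀ i : ℕ, m ≤ i → F.r i = 0}

/-- The depth of `S/I` with respect to the graded maximal ideal; by the
Auslander–Buchsbaum formula it equals `n - pd(S/I)`. -/
def depthQuot {n : ℕ} (I : Ideal (Poly K n)) : ℕ := n - pdQuot I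

/-- The Castelnuovo–Mumford regularity `reg(S/I) = max { j - i : β_{i,j}(S/I) ≠ 0 }`:
the smallest `ρ` such that some (equivalently, the minimal) graded free resolution of
`S/I` has all twists in homological degree `i` bounded by `i + ρ`. (The free module
`F_i` above sits in homological degree `i + 1` of the resolution of `S/I`.) -/
def regQuot {n : ℕ} (I : Ideal (Poly K n)) : ℕ :=
  sInf {ρ : ℕ | ∃ F : GradedRes I, ∀ (i : ℕ) (k : Fin (F.r i)), F.t i k ≤ (ρ : ℤ) + i + 1}

section Aux
variable {K : Type} [Field K]

/-- kill one variable -/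
def killV {n : ℕ} (i : Fin n) : MvPolynomial (Fin n) K →ₐ[K] MvPolynomial (Fin n) K :=
  aeval (fun j => if j = i then 0 else X j)

@[simp] lemma killV_X {n : ℕ} (i j : Fin n) :
    killV (K := K) i (X j) = if j = i then 0 else X j := by
  simp [killV]

lemma killV_monomial {n : ℕ} (i : Fin n) (d : Fin n →₀ ℕ) (r : K) :
    killV i (monomial d r) = if d i = 0 then monomial d r else 0 := by
  rw [killV, aeval_monomial]
  split_ifs with h
  · rw [monomial_eq]
    congr 1
    apply Finsupp.prod_congr
    intro j hj
    rw [if_neg]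
    rintro rfl
    exact (Finsupp.mem_support_iff.mp hj) h
  · rw [Finsupp.prod, Finset.prod_eq_zero (Finsupp.mem_support_iff.mpr h), mul_zero]
    rw [if_pos rfl, zero_pow h]

lemma coeff_killV {n : ℕ} (i : Fin n) (p : MvPolynomial (Fin n) K) (m : Fin n →₀ ℕ) :
    coeff m (killV i p) = if m i = 0 then coeff m p else 0 := by
  induction p using MvPolynomial.induction_on' with
  | monomial d r =>
    rw [killV_monomial]
    rcases eq_or_ne (d i) 0 with hd | hd
    · rw [if_pos hd]
      rcases eq_or_ne (m i) 0 with hm | hm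
      · rw [if_pos hm]
      · rw [if_neg hm, coeff_monomial, if_neg]
        rintro rfl; exact hm hd
    · rw [if_neg hd, coeff_zero]
      rcases eq_or_ne (m i) 0 with hm | hm
      · rw [if_pos hm, coeff_monomial, if_neg]
        · rintro rfl; exact hd hm
      · rw [if_neg hm]
  | add p q hp hq =>
    rw [map_add, coeff_add, hp, hq, coeff_add]
    split_ifs <;> simp

lemma X_dvd_iff_killV {n : ℕ} (i : Fin n) (p : MvPolynomial (Fin n) K) :
    X i ∣ p ↔ killV i p = 0 := by
  constructor
  · rintro ⟨q, rfl⟩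
    rw [map_mul]
    simp
  · intro h
    rw [X_dvd_iff_modMonomial_eq_zero]
    ext m
    by_cases hni : Finsupp.single i 1 ≤ m
    · rw [coeff_modMonomial_of_le _ hni, coeff_zero]
    · rw [coeff_modMonomial_of_not_le _ hni, coeff_zero]
      have hmi : m i = 0 := by
        by_contra hc
        exact hni (by
          intro j
          rcases eq_or_ne j i with rfl | hj
          · simpa [Finsupp.single_apply] using Nat.one_le_iff_ne_zero.mpr hc
          · simp [Finsupp.single_apply, hj.symm])
      have := coeff_killV i p m
      rw [h, coeff_zero, if_pos hmi] at this
      exact this.symm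

lemma primeX {n : ℕ} (i : Fin n) : Prime (X i : MvPolynomial (Fin n) K) := by
  refine ⟨X_ne_zero i, ?_, ?_⟩
  · intro hu
    obtain ⟨q, hq⟩ := hu.dvd (α := MvPolynomial (Fin n) K) (a := 1)
    have : X i ∣ (1 : MvPolynomial (Fin n) K) := ⟨q, hq⟩
    rw [X_dvd_iff_killV, map_one] at this
    exact one_ne_zero this
  · intro p q h
    rw [X_dvd_iff_killV, map_mul, mul_eq_zero] at h
    rcases h with h | h
    · exact Or.inl ((X_dvd_iff_killV i p).mpr h)
    · exact Or.inr ((X_dvd_iff_killV i q).mpr h)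

lemma degree4 (ν : Fin 4 →₀ ℕ) : ν.degree = ν 0 + ν 1 + ν 2 + ν 3 := by
  rw [Finsupp.degree_apply, Finset.sum_subset (Finset.subset_univ _)]
  · exact Fin.sum_univ_four ν
  · intro x _ hx
    simpa using Finsupp.notMem_support_iff.mp hx

lemma hom_factor_le {f s h : MvPolynomial (Fin 4) K} {m n : ℕ} (hf0 : f ≠ 0)
    (hfs : f = s * h) (hf : f.IsHomogeneous m) (hh : h.IsHomogeneous n) : n ≤ m := by
  obtain ⟨ν, hν⟩ := ne_zero_iff.mp hf0
  have hd : ν.degree = m := by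
    by_contra hc; exact hν (hf.coeff_eq_zero hc)
  rw [hfs, coeff_mul] at hν
  obtain ⟨⟨p, q⟩, hmem, hpq⟩ := Finset.exists_ne_zero_of_sum_ne_zero hν
  have hq : q.degree = n := by
    by_contra hc
    exact hpq (by rw [hh.coeff_eq_zero hc, mul_zero])
  have hsum : p + q = ν := Finset.HasAntidiagonal.mem_antidiagonal.mp hmem
  have hc : ∀ j, p j + q j = ν j := fun j => by rw [← hsum]; rfl
  have e1 := degree4 ν
  have e2 := degree4 q
  have h0 := hc 0; have h1 := hc 1; have h2 := hc 2; have h3 := hc 3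
  omega

lemma mem_span_triple' {R : Type*} [CommRing R] {x a b c : R} (h : x ∈ Ideal.span {a, b, c}) :
    ∃ A B C, x = A * a + B * b + C * c := by
  rw [Ideal.mem_span_insert] at h
  obtain ⟨A, z, hz, rfl⟩ := h
  rw [Ideal.mem_span_insert] at hz
  obtain ⟨B, w, hw, rfl⟩ := hz
  rw [Ideal.mem_span_singleton'] at hw
  obtain ⟨C, hC⟩ := hw
  exact ⟨A, B, C, by rw [← hC]; ring⟩

end Aux

section Main
variable (K : Type) [Field K]

def pA (u : ℕ) : MvPolynomial (Fin 4) K := (X 0 * X 1) ^ (2 + u)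
def pB : MvPolynomial (Fin 4) K := X 1 * X 2
def pC (v : ℕ) : MvPolynomial (Fin 4) K := (X 2 * X 3) ^ (1 + v)

def muA (u : ℕ) : Fin 4 →₀ ℕ := Finsupp.single 0 (2 + u) + Finsupp.single 1 (2 + u)

variable {K}

lemma pA_monomial (u : ℕ) : pA K u = monomial (muA u) 1 := by
  rw [pA, mul_pow, X_pow_eq_monomial, X_pow_eq_monomial, monomial_mul, one_mul, muA]

lemma muA_apply (u : ℕ) :
    muA u 0 = 2 + u ∧ muA u 1 = 2 + u ∧ muA u 2 = 0 ∧ muA u 3 = 0 := by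
  refine ⟨?_, ?_, ?_, ?_⟩ <;> simp [muA, Finsupp.single_apply]

lemma pA_ne_zero (u : ℕ) : pA K u ≠ 0 :=
  pow_ne_zero _ (mul_ne_zero (X_ne_zero _) (X_ne_zero _))

lemma pB_ne_zero : pB K ≠ 0 := mul_ne_zero (X_ne_zero _) (X_ne_zero _)

lemma pA_hom (u : ℕ) : (pA K u).IsHomogeneous (2 * u + 4) := by
  have h := (((isHomogeneous_X K (0 : Fin 4)).mul (isHomogeneous_X K 1)).pow (2 + u))
  have he : (1 + 1) * (2 + u) = 2 * u + 4 := by ring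
  rw [he] at h
  exact h

lemma pB_hom : (pB K).IsHomogeneous 2 :=
  (isHomogeneous_X K (1 : Fin 4)).mul (isHomogeneous_X K 2)

lemma pC_hom (v : ℕ) : (pC K v).IsHomogeneous (2 * v + 2) := by
  have h := (((isHomogeneous_X K (2 : Fin 4)).mul (isHomogeneous_X K 3)).pow (1 + v))
  have he : (1 + 1) * (1 + v) = 2 * v + 2 := by ring
  rw [he] at h
  exact h

/-- every homogeneous element of `I` of degree `< 2*w1` has all monomials divisible by `X 2` -/
lemma low_coeff (u v : ℕ) {f : MvPolynomial (Fin 4) K}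
    (hf : f ∈ Ideal.span {pA K u, pB K, pC K v})
    {m : ℕ} (hm : f.IsHomogeneous m) (hlt : m < 2 * u + 4) {ν : Fin 4 →₀ ℕ} (hν : ν 2 = 0) :
    coeff ν f = 0 := by
  by_cases hdeg : ν.degree = m
  case neg => exact hm.coeff_eq_zero hdeg
  obtain ⟨A, B, C, rfl⟩ := mem_span_triple' hf
  rw [coeff_add, coeff_add]
  have hB : coeff ν (B * pB K) = 0 := by
    rw [pB, ← mul_assoc, coeff_mul_X', if_neg (by simp [hν])]
  have hC : coeff ν (C * pC K v) = 0 := by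
    have he : C * pC K v = (C * (X 2 ^ v * X 3 ^ (1 + v))) * X 2 := by rw [pC]; ring
    rw [he, coeff_mul_X', if_neg (by simp [hν])]
  have hA : coeff ν (A * pA K u) = 0 := by
    rw [pA_monomial, coeff_mul_monomial', if_neg]
    intro hle
    have h0 : muA u 0 ≤ ν 0 := hle 0
    have h1 : muA u 1 ≤ ν 1 := hle 1
    obtain ⟨e0, e1, -, -⟩ := muA_apply u
    have hd4 := degree4 ν
    omega
  rw [hA, hB, hC]
  ring

lemma not_low_span (u v : ℕ) {N : ℕ} (g : Fin N → MvPolynomial (Fin 4) K)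
    (hmem : ∀ k, g k ∈ Ideal.span {pA K u, pB K, pC K v})
    (hdeg : ∀ k, g k = 0 ∨ ∃ m, m < 2 * u + 4 ∧ (g k).IsHomogeneous m)
    (hspan : pA K u ∈ Ideal.span (Set.range g)) : False := by
  rw [Ideal.span, Submodule.mem_span_range_iff_exists_fun] at hspan
  obtain ⟨h, hh⟩ := hspan
  have h1 : coeff (muA u) (pA K u) = 1 := by
    rw [pA_monomial, coeff_monomial, if_pos rfl]
  rw [← hh] at h1
  have hzero : ∀ k : Fin N, coeff (muA u) (h k • g k) = 0 := by
    intro k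
    rw [smul_eq_mul, coeff_mul]
    apply Finset.sum_eq_zero
    rintro ⟨p, q⟩ hpq
    have hq2 : q 2 = 0 := by
      have hs : p + q = muA u := Finset.HasAntidiagonal.mem_antidiagonal.mp hpq
      have hfun := DFunLike.congr_fun hs (2 : Fin 4)
      obtain ⟨-, -, e2, -⟩ := muA_apply u
      simp only [Finsupp.add_apply] at hfun
      omega
    rcases hdeg k with h0 | ⟨m, hm, hhom⟩
    · rw [h0, coeff_zero, mul_zero]
    · rw [low_coeff u v (hmem k) hhom hm hq2, mul_zero]
  rw [coeff_sum] at h1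
  rw [Finset.sum_congr rfl (fun k _ => hzero k)] at h1
  simp at h1


section Res
variable (K : Type) [Field K] (u v : ℕ)

def resR : ℕ → ℕ
  | 0 => 3
  | 1 => 2
  | _ + 2 => 0

def resT : (i : ℕ) → Fin (resR i) → ℤ
  | 0 => ![2 * u + 4, 2, 2 * v + 2]
  | 1 => ![2 * u + 5, 2 * v + 3]
  | _ + 2 => fun k => Fin.elim0 k

def resG : Fin (resR 0) → Poly K 4 := ![pA K u, pB K, pC K v]

def resD : (i : ℕ) → Matrix (Fin (resR i)) (Fin (resR (i + 1))) (Poly K 4)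
  | 0 => Matrix.of ![![X 2, 0], ![-(X 0 ^ (2 + u) * X 1 ^ (1 + u)), X 2 ^ v * X 3 ^ (1 + v)], ![0, -(X 1)]]
  | _ + 1 => fun _ k => Fin.elim0 k

variable {K u v}

lemma aug_apply {n m : ℕ} (g : Fin m → Poly K n) (w : Fin m → Poly K n) :
    aug g w = ∑ k, w k * g k := rfl

lemma exact0 :
    LinearMap.ker (aug (![pA K u, pB K, pC K v] : Fin 3 → Poly K 4)) =
      LinearMap.range (Matrix.of ![![X 2, 0],
        ![-(X 0 ^ (2 + u) * X 1 ^ (1 + u)), X 2 ^ v * X 3 ^ (1 + v)],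
        ![0, -(X 1)]] : Matrix (Fin 3) (Fin 2) (Poly K 4)).mulVecLin := by
  ext w
  rw [LinearMap.mem_ker, LinearMap.mem_range]
  constructor
  · intro hw
    rw [aug_apply, Fin.sum_univ_three] at hw
    simp only [Matrix.cons_val_zero, Matrix.cons_val_one, Matrix.head_cons,
      Matrix.cons_val_two, Matrix.tail_cons] at hw
    rw [pA, pB, pC] at hw
    have hdvd0 : (X 2 : Poly K 4) ∣ w 0 := by
      have hd : (X 2 : Poly K 4) ∣ w 0 * (X 0 * X 1) ^ (2 + u) :=
        ⟨-(w 1 * X 1 + w 2 * (X 2 ^ v * X 3 ^ (1 + v))), by linear_combination hw⟩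
      rcases (primeX 2).2.2 _ _ hd with h | h
      · exact h
      · exfalso
        rw [X_dvd_iff_killV, map_pow, map_mul, killV_X, killV_X,
          if_neg (by decide), if_neg (by decide)] at h
        exact pA_ne_zero u h
    obtain ⟨p, hp⟩ := hdvd0
    have hinner : p * (X 0 * X 1) ^ (2 + u) + w 1 * X 1 + w 2 * (X 2 ^ v * X 3 ^ (1 + v)) = 0 := by
      have h2 : (X 2 : Poly K 4) *
          (p * (X 0 * X 1) ^ (2 + u) + w 1 * X 1 + w 2 * (X 2 ^ v * X 3 ^ (1 + v))) = X 2 * 0 := by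
        rw [hp] at hw
        linear_combination hw
      exact mul_left_cancel₀ (X_ne_zero 2) h2
    have hdvd2 : (X 1 : Poly K 4) ∣ w 2 := by
      have hd : (X 1 : Poly K 4) ∣ w 2 * (X 2 ^ v * X 3 ^ (1 + v)) :=
        ⟨-(p * X 0 ^ (2 + u) * X 1 ^ (1 + u) + w 1), by linear_combination hinner⟩
      rcases (primeX 1).2.2 _ _ hd with h | h
      · exact h
      · exfalso
        rw [X_dvd_iff_killV, map_mul, map_pow, map_pow, killV_X, killV_X,
          if_neg (by decide), if_neg (by decide)] at h
        exact (mul_ne_zero (pow_ne_zero _ (X_ne_zero _)) (pow_ne_zero _ (X_ne_zero _))) h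
    obtain ⟨q, hq⟩ := hdvd2
    have hw1 : w 1 = -(p * X 0 ^ (2 + u) * X 1 ^ (1 + u)) - q * (X 2 ^ v * X 3 ^ (1 + v)) := by
      have h2 : (X 1 : Poly K 4) *
          (w 1 + p * X 0 ^ (2 + u) * X 1 ^ (1 + u) + q * (X 2 ^ v * X 3 ^ (1 + v))) = X 1 * 0 := by
        rw [hq] at hinner
        linear_combination hinner
      have h3 := mul_left_cancel₀ (X_ne_zero 1) h2
      linear_combination h3
    refine ⟨![p, -q], ?_⟩
    set M : Matrix (Fin 3) (Fin 2) (Poly K 4) := Matrix.of ![![X 2, 0],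
        ![-(X 0 ^ (2 + u) * X 1 ^ (1 + u)), X 2 ^ v * X 3 ^ (1 + v)],
        ![0, -(X 1)]] with hM
    have e0 : M.mulVecLin ![p, -q] 0 = w 0 := by
      simp only [hM, Matrix.mulVecLin_apply, Matrix.mulVec, dotProduct, Fin.sum_univ_two,
        Matrix.of_apply, Matrix.cons_val_zero, Matrix.cons_val_one, Matrix.head_cons]
      linear_combination -hp
    have e1 : M.mulVecLin ![p, -q] 1 = w 1 := by
      simp only [hM, Matrix.mulVecLin_apply, Matrix.mulVec, dotProduct, Fin.sum_univ_two,
        Matrix.of_apply, Matrix.cons_val_zero, Matrix.cons_val_one, Matrix.head_cons]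
      linear_combination -hw1
    have e2 : M.mulVecLin ![p, -q] 2 = w 2 := by
      simp only [hM, Matrix.mulVecLin_apply, Matrix.mulVec, dotProduct, Fin.sum_univ_two,
        Matrix.of_apply, Matrix.cons_val_zero, Matrix.cons_val_one, Matrix.head_cons,
        Matrix.cons_val_two, Matrix.tail_cons]
      linear_combination -hq
    funext k
    fin_cases k
    · exact e0
    · exact e1
    · exact e2
  · rintro ⟨z, rfl⟩
    rw [aug_apply, Fin.sum_univ_three]
    simp only [Matrix.mulVecLin_apply, Matrix.mulVec, dotProduct, Fin.sum_univ_two,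
      Matrix.of_apply, Matrix.cons_val', Matrix.cons_val_zero, Matrix.cons_val_one,
      Matrix.head_cons, Matrix.cons_val_two, Matrix.tail_cons, Matrix.empty_val',
      Matrix.cons_val_fin_one, Matrix.head_fin_const]
    rw [pA, pB, pC]
    ring

lemma exact1 :
    LinearMap.ker (Matrix.of ![![X 2, 0],
        ![-(X 0 ^ (2 + u) * X 1 ^ (1 + u)), X 2 ^ v * X 3 ^ (1 + v)],
        ![0, -(X 1)]] : Matrix (Fin 3) (Fin 2) (Poly K 4)).mulVecLin =
      LinearMap.range (Matrix.mulVecLin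
        ((fun _ k => Fin.elim0 k) : Matrix (Fin 2) (Fin 0) (Poly K 4))) := by
  ext w
  rw [LinearMap.mem_ker, LinearMap.mem_range]
  constructor
  · intro hw
    have h0 := congrFun hw 0
    have h2 := congrFun hw 2
    simp only [Matrix.mulVecLin_apply, Matrix.mulVec, dotProduct, Fin.sum_univ_two,
      Matrix.of_apply, Matrix.cons_val', Matrix.cons_val_zero, Matrix.cons_val_one,
      Matrix.head_cons, Matrix.cons_val_two, Matrix.tail_cons, Matrix.empty_val',
      Matrix.cons_val_fin_one, Matrix.head_fin_const, Pi.zero_apply] at h0 h2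
    have hw0 : w 0 = 0 := by
      have := h0
      rw [zero_mul, add_zero] at this
      exact (mul_eq_zero.mp this).resolve_left (X_ne_zero 2)
    have hw1 : w 1 = 0 := by
      have := h2
      rw [zero_mul, zero_add, neg_mul] at this
      have h3 : (X 1 : Poly K 4) * w 1 = 0 := by linear_combination -this
      exact (mul_eq_zero.mp h3).resolve_left (X_ne_zero 1)
    have : w = 0 := by
      funext k; fin_cases k
      · exact hw0
      · exact hw1
    refine ⟨0, ?_⟩
    rw [this, map_zero]
  · rintro ⟨z, rfl⟩
    have hz : Matrix.mulVecLin
        ((fun _ k => Fin.elim0 k) : Matrix (Fin 2) (Fin 0) (Poly K 4)) z = 0 := by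
      funext i
      show Matrix.mulVec ((fun _ k => Fin.elim0 k) : Matrix (Fin 2) (Fin 0) (Poly K 4)) z i = 0
      simp [Matrix.mulVec, dotProduct]
    rw [hz, map_zero]

def resolution : GradedRes (Ideal.span {pA K u, pB K, pC K v}) where
  r := resR
  t := resT u v
  g := resG K u v
  ghom := by
    intro k
    fin_cases k
    · show PieceHomog 0 (2 * (u:ℤ) + 4) (pA K u)
      rw [PieceHomog, if_pos (by omega)]
      have he : ((2 * (u:ℤ) + 4 - 0)).toNat = 2 * u + 4 := by omega
      rw [he]
      exact pA_hom u
    · show PieceHomog 0 (2 : ℤ) (pB K)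
      rw [PieceHomog, if_pos (by omega)]
      have he : ((2 : ℤ) - 0).toNat = 2 := by omega
      rw [he]
      exact pB_hom
    · show PieceHomog 0 (2 * (v:ℤ) + 2) (pC K v)
      rw [PieceHomog, if_pos (by omega)]
      have he : ((2 * (v:ℤ) + 2 - 0)).toNat = 2 * v + 2 := by omega
      rw [he]
      exact pC_hom v
  gspan := by
    have : Set.range (resG K u v) = {pA K u, pB K, pC K v} := by
      ext x
      constructor
      · rintro ⟨k, rfl⟩
        fin_cases k <;> [exact Or.inl rfl; exact Or.inr (Or.inl rfl); exact Or.inr (Or.inr rfl)]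
      · intro hx
        rcases hx with rfl | rfl | rfl
        · have h0 : resG K u v ⟨0, by decide⟩ = pA K u := rfl
          exact ⟨_, h0⟩
        · have h0 : resG K u v ⟨1, by decide⟩ = pB K := rfl
          exact ⟨_, h0⟩
        · have h0 : resG K u v ⟨2, by decide⟩ = pC K v := rfl
          exact ⟨_, h0⟩
    rw [this]
  d := resD K u v
  dhom := by
    intro i k k'
    match i with
    | 0 =>
      fin_cases k <;> fin_cases k'
      · show PieceHomog (2 * (u:ℤ) + 4) (2 * (u:ℤ) + 5) (X 2)
        rw [PieceHomog, if_pos (by omega)]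
        have he : ((2 * (u:ℤ) + 5) - (2 * (u:ℤ) + 4)).toNat = 1 := by omega
        rw [he]
        exact isHomogeneous_X K 2
      · show PieceHomog (2 * (u:ℤ) + 4) (2 * (v:ℤ) + 3) (0 : Poly K 4)
        rw [PieceHomog]
        split_ifs with h
        · exact isHomogeneous_zero _ _ _
        · rfl
      · show PieceHomog 2 (2 * (u:ℤ) + 5) (-(X 0 ^ (2 + u) * X 1 ^ (1 + u)))
        rw [PieceHomog, if_pos (by omega)]
        have he : ((2 * (u:ℤ) + 5) - 2).toNat = (2 + u) + (1 + u) := by omega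
        rw [he]
        exact ((isHomogeneous_X_pow _ _).mul (isHomogeneous_X_pow _ _)).neg
      · show PieceHomog 2 (2 * (v:ℤ) + 3) (resD K u v 0 ⟨1, by decide⟩ ⟨1, by decide⟩)
        have e : resD K u v 0 ⟨1, by decide⟩ ⟨1, by decide⟩ = X 2 ^ v * X 3 ^ (1 + v) := rfl
        rw [e, PieceHomog, if_pos (by omega)]
        have he : ((2 * (v:ℤ) + 3) - 2).toNat = v + (1 + v) := by omega
        rw [he]
        exact (isHomogeneous_X_pow _ _).mul (isHomogeneous_X_pow _ _)
      · show PieceHomog (2 * (v:ℤ) + 2) (2 * (u:ℤ) + 5) (0 : Poly K 4)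
        rw [PieceHomog]
        split_ifs with h
        · exact isHomogeneous_zero _ _ _
        · rfl
      · show PieceHomog (2 * (v:ℤ) + 2) (2 * (v:ℤ) + 3) (-(X 1))
        rw [PieceHomog, if_pos (by omega)]
        have he : ((2 * (v:ℤ) + 3) - (2 * (v:ℤ) + 2)).toNat = 1 := by omega
        rw [he]
        exact (isHomogeneous_X K 1).neg
    | n + 1 => exact Fin.elim0 k'
  exact_zero := exact0
  exact_succ := by
    intro i
    match i with
    | 0 => exact exact1
    | n + 1 =>
      ext w
      have hw : w = 0 := funext fun k => Fin.elim0 k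
      constructor
      · intro _
        rw [hw]
        exact Submodule.zero_mem _
      · intro _
        rw [hw]
        exact Submodule.zero_mem _


/-- regularity computation -/
lemma regQuot_eq (u v : ℕ) (huv : v ≤ u + 1) :
    regQuot (Ideal.span {pA K u, pB K, pC K v}) = 2 * (2 + u) - 1 := by
  have hmem : (2 * (2 + u) - 1) ∈ {ρ : ℕ | ∃ F : GradedRes (Ideal.span {pA K u, pB K, pC K v}),
      ∀ (i : ℕ) (k : Fin (F.r i)), F.t i k ≤ (ρ : ℤ) + i + 1} := by
    refine ⟨resolution, ?_⟩
    intro i k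
    have et : (resolution (K := K) (u := u) (v := v)).t = resT u v := rfl
    rw [et]
    match i with
    | 0 =>
      fin_cases k
      · have e : resT u v 0 ⟨0, by decide⟩ = 2 * (u:ℤ) + 4 := rfl
        refine e.trans_le ?_
        omega
      · have e : resT u v 0 ⟨1, by decide⟩ = 2 := rfl
        refine e.trans_le ?_
        omega
      · have e : resT u v 0 ⟨2, by decide⟩ = 2 * (v:ℤ) + 2 := rfl
        refine e.trans_le ?_
        omega
    | 1 =>
      fin_cases k
      · have e : resT u v 1 ⟨0, by decide⟩ = 2 * (u:ℤ) + 5 := rfl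
        refine e.trans_le ?_
        push_cast
        omega
      · have e : resT u v 1 ⟨1, by decide⟩ = 2 * (v:ℤ) + 3 := rfl
        refine e.trans_le ?_
        push_cast
        omega
    | n + 2 => exact Fin.elim0 k
  apply le_antisymm (Nat.sInf_le hmem)
  apply le_csInf ⟨_, hmem⟩
  intro b hb
  by_contra hlt
  push_neg at hlt
  obtain ⟨F, hF⟩ := hb
  refine not_low_span u v F.g ?_ ?_ ?_
  · intro k
    have h1 : F.g k ∈ Ideal.span (Set.range F.g) := Ideal.subset_span ⟨k, rfl⟩
    rwa [F.gspan] at h1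
  · intro k
    have hg := F.ghom k
    rw [PieceHomog] at hg
    split_ifs at hg with hpos
    · right
      refine ⟨(F.t 0 k - 0).toNat, ?_, hg⟩
      have hFk := hF 0 k
      have hcast : ((0:ℕ):ℤ) = 0 := rfl
      omega
    · exact Or.inl hg
  · have h1 : pA K u ∈ Ideal.span {pA K u, pB K, pC K v} :=
      Ideal.subset_span (Set.mem_insert _ _)
    rwa [← F.gspan] at h1

/-- projective dimension computation -/
lemma pdQuot_eq (u v : ℕ) :
    pdQuot (Ideal.span {pA K u, pB K, pC K v}) = 2 := by
  have hmem : 2 ∈ {m : ℕ | ∃ F : GradedRes (Ideal.span {pA K u, pB K, pC K v}),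
      ∀ i : ℕ, m ≤ i → F.r i = 0} := by
    refine ⟨resolution, ?_⟩
    intro i hi
    match i with
    | n + 2 => rfl
    | 0 => exact absurd hi (by omega)
    | 1 => exact absurd hi (by omega)
  apply le_antisymm (Nat.sInf_le hmem)
  apply le_csInf ⟨_, hmem⟩
  intro m hm
  by_contra hlt
  push_neg at hlt
  obtain ⟨F, hr⟩ := hm
  have hr1 : F.r 1 = 0 := hr 1 (by omega)
  rcases Nat.lt_or_ge (F.r 0) 2 with h01 | h2
  · rcases Nat.lt_or_ge (F.r 0) 1 with h00 | h1
    · -- r 0 = 0 : the ideal would be zero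
      haveI : IsEmpty (Fin (F.r 0)) := ⟨fun k => by have := k.isLt; omega⟩
      have hpB : pB K ∈ Ideal.span {pA K u, pB K, pC K v} :=
        Ideal.subset_span (Set.mem_insert_iff.mpr (Or.inr (Set.mem_insert _ _)))
      rw [← F.gspan, Set.range_eq_empty, Ideal.span_empty] at hpB
      exact pB_ne_zero ((Submodule.mem_bot _).mp hpB)
    · -- r 0 = 1 : the ideal would be principal
      have hr0 : F.r 0 = 1 := by omega
      set k0 : Fin (F.r 0) := ⟨0, by omega⟩ with hk0
      have huniq : ∀ k : Fin (F.r 0), k = k0 := by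
        intro k
        apply Fin.ext
        have := k.isLt
        simp only [hk0]
        omega
      have hrange : Set.range F.g = {F.g k0} := by
        ext x
        constructor
        · rintro ⟨k, rfl⟩
          rw [huniq k]
          rfl
        · rintro rfl
          exact ⟨k0, rfl⟩
      have hg0I : pB K ∈ Ideal.span {F.g k0} := by
        have h1 : pB K ∈ Ideal.span {pA K u, pB K, pC K v} :=
          Ideal.subset_span (Set.mem_insert_iff.mpr (Or.inr (Set.mem_insert _ _)))
        rw [← F.gspan, hrange] at h1
        exact h1
      obtain ⟨p, hp⟩ := Ideal.mem_span_singleton'.mp hg0I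
      have hg := F.ghom k0
      rw [PieceHomog] at hg
      split_ifs at hg with hpos
      · have hle : (F.t 0 k0 - 0).toNat ≤ 2 :=
          hom_factor_le pB_ne_zero hp.symm pB_hom hg
        refine not_low_span u v F.g ?_ ?_ ?_
        · intro k
          have h1 : F.g k ∈ Ideal.span (Set.range F.g) := Ideal.subset_span ⟨k, rfl⟩
          rwa [F.gspan] at h1
        · intro k
          rw [huniq k]
          exact Or.inr ⟨_, by omega, hg⟩
        · have h1 : pA K u ∈ Ideal.span {pA K u, pB K, pC K v} :=
            Ideal.subset_span (Set.mem_insert _ _)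
          rwa [← F.gspan] at h1
      · rw [hg, mul_zero] at hp
        exact pB_ne_zero hp.symm
  · -- r 0 ≥ 2 : there is a Koszul syzygy but no syzygies
    haveI : IsEmpty (Fin (F.r 1)) := ⟨fun k => by have := k.isLt; omega⟩
    have hker : ∀ x, aug F.g x = 0 → x = 0 := by
      intro x hx
      have hxr : x ∈ LinearMap.range (F.d 0).mulVecLin := by
        rw [← F.exact_zero]
        exact LinearMap.mem_ker.mpr hx
      obtain ⟨z, hz⟩ := hxr
      rw [← hz]
      funext j
      simp [Matrix.mulVecLin_apply, Matrix.mulVec, dotProduct]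
    set k0 : Fin (F.r 0) := ⟨0, by omega⟩ with hk0
    set k1 : Fin (F.r 0) := ⟨1, by omega⟩ with hk1
    have hne : k0 ≠ k1 := by
      intro h
      have := congrArg Fin.val h
      simp only [hk0, hk1] at this
      omega
    have hxg : ∀ k, (if k = k0 then F.g k1 else if k = k1 then -(F.g k0) else 0) * F.g k =
        (if k = k0 then F.g k1 * F.g k0 else 0) + (if k = k1 then -(F.g k0 * F.g k1) else 0) := by
      intro k
      by_cases h0 : k = k0
      · subst h0
        rw [if_pos rfl, if_pos rfl, if_neg hne, add_zero]
      · by_cases h1 : k = k1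
        · subst h1
          rw [if_neg h0, if_pos rfl, if_pos rfl, if_neg h0, zero_add, neg_mul]
        · rw [if_neg h0, if_neg h1, if_neg h0, if_neg h1, zero_mul, add_zero]
    have haugx : aug F.g (fun k => if k = k0 then F.g k1 else if k = k1 then -(F.g k0) else 0)
        = 0 := by
      rw [aug_apply]
      rw [show (∑ k, (if k = k0 then F.g k1 else if k = k1 then -(F.g k0) else 0) * F.g k) =
        ∑ k, ((if k = k0 then F.g k1 * F.g k0 else 0) +
          (if k = k1 then -(F.g k0 * F.g k1) else 0)) from Finset.sum_congr rfl fun k _ => hxg k]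
      rw [Finset.sum_add_distrib,
        Finset.sum_ite_eq' Finset.univ k0 (fun _ => F.g k1 * F.g k0),
        Finset.sum_ite_eq' Finset.univ k1 (fun _ => -(F.g k0 * F.g k1)),
        if_pos (Finset.mem_univ _), if_pos (Finset.mem_univ _)]
      ring
    have hx0 := hker _ haugx
    have hgk0 : F.g k0 = 0 := by
      have h5 := congrFun hx0 k1
      simp only [if_neg (Ne.symm hne), if_pos rfl, Pi.zero_apply] at h5
      exact neg_eq_zero.mp h5
    have hyg : ∀ k, (if k = k0 then (1 : Poly K 4) else 0) * F.g k =
        if k = k0 then F.g k0 else 0 := by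
      intro k
      by_cases h0 : k = k0
      · subst h0
        rw [if_pos rfl, if_pos rfl, one_mul]
      · rw [if_neg h0, if_neg h0, zero_mul]
    have haugy : aug F.g (fun k => if k = k0 then (1 : Poly K 4) else 0) = 0 := by
      rw [aug_apply]
      rw [show (∑ k, (if k = k0 then (1 : Poly K 4) else 0) * F.g k) =
        ∑ k, (if k = k0 then F.g k0 else 0) from Finset.sum_congr rfl fun k _ => hyg k]
      rw [Finset.sum_ite_eq' Finset.univ k0 (fun _ => F.g k0), if_pos (Finset.mem_univ _), hgk0]
    have hy0 := hker _ haugy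
    have h6 := congrFun hy0 k0
    simp only [if_pos rfl, Pi.zero_apply] at h6
    exact one_ne_zero h6

end Res
end Main

end EWGraph
namespace EWGraph
/-- for `I = ((x_1x_2)^{w_1}, x_2x_3, (x_3x_4)^{w_3})` with
`w_1 ≥ w_3 ≥ 1` and `w_1 ≥ 2`: `reg(S/I) = 2w_1 - 1` and `depth(S/I) = 2`. -/
theorem path4_mid_trivial_reg_depth (K : Type) [Field K] (w1 w3 : ℕ)
    (hw3 : 1 ≤ w3) (h13 : w3 ≤ w1) (hw1 : 2 ≤ w1) :
    regQuot (Ideal.span {((X 0 * X 1 : Poly K 4)) ^ w1, X 1 * X 2, (X 2 * X 3) ^ w3}) =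
        2 * w1 - 1 ∧
      depthQuot (Ideal.span {((X 0 * X 1 : Poly K 4)) ^ w1, X 1 * X 2, (X 2 * X 3) ^ w3}) = 2 := by
  obtain ⟨u, rfl⟩ := Nat.exists_eq_add_of_le hw1
  obtain ⟨v, rfl⟩ := Nat.exists_eq_add_of_le hw3
  constructor
  · exact regQuot_eq u v (by omega)
  · show 4 - pdQuot (Ideal.span {pA K u, pB K, pC K v}) = 2
    rw [pdQuot_eq u v]


end EWGraph
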